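/- Consider the action of T^3 on S^3 × S^3 × S^3 given by (z₁,z₂,z₃)·((u₁,v₁),(u₂,v₂),(u₃,v₃)) = ((z₁u₁, z₁z₂z̄₃v₁), (z₂z̄₃u₂, z̄₁z₂v₂), (z̄₁z₂z₃u₃, z₃v₃)). A point has nontrivial stabilizer if and only if either (v₂ = v₃ = 0) or (u₁ = u₂ = 0); in the first case the stabilizer is {(1,1,1), (1,-1,-1)} ≅ ℤ/2, and in the second case it is {(1,1,1), (-1,-1,1)} ≅ ℤ/2. -/

import Mathlib

/-- The action (1) of Example 3: `(z₁,z₂,z₃)` sends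
`((u₁,v₁),(u₂,v₂),(u₃,v₃))` to
`((z₁u₁, z₁z₂z̄₃v₁), (z₂z̄₃u₂, z̄₁z₂v₂), (z̄₁z₂z₃u₃, z₃v₃))`.
`FixesEx3 z u v` says that the torus element `z` fixes the point `(u,v)`. -/
def FixesEx3 (z u v : Fin 3 → ℂ) : Prop :=
  z 0 * u 0 = u 0 ∧ z 0 * z 1 * star (z 2) * v 0 = v 0 ∧
  z 1 * star (z 2) * u 1 = u 1 ∧ star (z 0) * z 1 * v 1 = v 1 ∧
  star (z 0) * z 1 * z 2 * u 2 = u 2 ∧ z 2 * v 2 = v 2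

lemma star_eq_inv_of_norm_one (a : ℂ) (h : ‖a‖ = 1) : star a = a⁻¹ := by
  have h1 : a * star a = 1 := by
    rw [Complex.star_def, Complex.mul_conj]
    norm_cast
    rw [Complex.normSq_eq_norm_sq, h]; norm_num
  exact eq_inv_of_mul_eq_one_right h1

lemma cancel_one (w x : ℂ) (hx : x ≠ 0) (h : w * x = x) : w = 1 :=
  mul_right_cancel₀ hx (by rw [h, one_mul])

lemma main_lemma (u v z : Fin 3 → ℂ) (hn : ∀ i, ‖z i‖ = 1)
    (hs : ∀ i, u i ≠ 0 ∨ v i ≠ 0) (hf : FixesEx3 z u v) :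
    z = (fun _ => 1) ∨ ((v 1 = 0 ∧ v 2 = 0) ∧ z = ![1, -1, -1]) ∨
      ((u 0 = 0 ∧ u 1 = 0) ∧ z = ![-1, -1, 1]) := by
  obtain ⟨e1, e2, e3, e4, e5, e6⟩ := hf
  have hz0 : z 0 ≠ 0 := by intro h; have := hn 0; rw [h] at this; simp at this
  have hz1 : z 1 ≠ 0 := by intro h; have := hn 1; rw [h] at this; simp at this
  have hz2 : z 2 ≠ 0 := by intro h; have := hn 2; rw [h] at this; simp at this
  rw [star_eq_inv_of_norm_one _ (hn 2)] at e2 e3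
  rw [star_eq_inv_of_norm_one _ (hn 0)] at e4 e5
  -- derived implications
  have H1 : u 0 ≠ 0 → z 0 = 1 := fun h => cancel_one _ _ h e1
  have H2 : v 0 ≠ 0 → z 0 * z 1 * (z 2)⁻¹ = 1 := fun h => cancel_one _ _ h e2
  have H3 : u 1 ≠ 0 → z 1 = z 2 := fun h => by
    have := cancel_one _ _ h e3
    field_simp at this; exact this
  have H4 : v 1 ≠ 0 → z 1 = z 0 := fun h => by
    have := cancel_one _ _ h e4
    field_simp at this; exact this
  have H5 : u 2 ≠ 0 → z 1 * z 2 = z 0 := fun h => by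
    have := cancel_one _ _ h e5
    field_simp at this; exact this
  have H6 : v 2 ≠ 0 → z 2 = 1 := fun h => cancel_one _ _ h e6
  have mk1 : z 0 = 1 → z 1 = 1 → z 2 = 1 → z = fun _ => 1 := fun h0 h1 h2 => by
    funext i; fin_cases i <;> simpa
  have mk2 : z 0 = 1 → z 1 = -1 → z 2 = -1 → z = ![1, -1, -1] := fun h0 h1 h2 => by
    funext i; fin_cases i <;> simpa
  have mk3 : z 0 = -1 → z 1 = -1 → z 2 = 1 → z = ![-1, -1, 1] := fun h0 h1 h2 => by
    funext i; fin_cases i <;> simpa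
  rcases em (u 1 = 0) with hu1 | hu1
  · -- u 1 = 0, so v 1 ≠ 0
    have hv1 : v 1 ≠ 0 := (hs 1).resolve_left (not_not_intro hu1)
    have hba : z 1 = z 0 := H4 hv1
    rcases em (u 0 = 0) with hu0 | hu0
    · have hv0 : v 0 ≠ 0 := (hs 0).resolve_left (not_not_intro hu0)
      have hc : z 2 = z 0 ^ 2 := by
        have := H2 hv0
        field_simp [hba] at this
        linear_combination -this + z 0 * hba
      have hc1 : z 2 = 1 := by
        rcases em (v 2 = 0) with hv2 | hv2
        · have hu2 : u 2 ≠ 0 := (hs 2).resolve_right (not_not_intro hv2)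
          have := H5 hu2
          rw [hba, hc] at this
          have h3 : z 0 * (z 0 ^ 2) = z 0 * 1 := by rw [mul_one]; linear_combination this
          have := mul_left_cancel₀ hz0 h3
          rw [hc, this]
        · exact H6 hv2
      have hsq : z 0 ^ 2 = 1 := by rw [← hc]; exact hc1
      have : (z 0 - 1) * (z 0 + 1) = 0 := by linear_combination hsq
      rcases mul_eq_zero.mp this with h | h
      · have h0 : z 0 = 1 := by linear_combination h
        exact Or.inl (mk1 h0 (hba.trans h0) hc1)
      · have h0 : z 0 = -1 := by linear_combination h
        exact Or.inr (Or.inr ⟨⟨hu0, hu1⟩, mk3 h0 (hba.trans h0) hc1⟩)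
    · have h0 : z 0 = 1 := H1 hu0
      have h1 : z 1 = 1 := hba.trans h0
      have h2 : z 2 = 1 := by
        rcases em (v 2 = 0) with hv2 | hv2
        · have hu2 : u 2 ≠ 0 := (hs 2).resolve_right (not_not_intro hv2)
          have := H5 hu2
          rw [h1, h0, one_mul] at this; exact this
        · exact H6 hv2
      exact Or.inl (mk1 h0 h1 h2)
  · -- u 1 ≠ 0
    have hbc : z 1 = z 2 := H3 hu1
    rcases em (v 1 = 0) with hv1 | hv1
    · rcases em (v 2 = 0) with hv2 | hv2
      · have hu2 : u 2 ≠ 0 := (hs 2).resolve_right (not_not_intro hv2)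
        have ha : z 0 = z 1 ^ 2 := by
          have := H5 hu2
          rw [← hbc] at this
          rw [← this]; ring
        have h0 : z 0 = 1 := by
          rcases em (u 0 = 0) with hu0 | hu0
          · have hv0 : v 0 ≠ 0 := (hs 0).resolve_left (not_not_intro hu0)
            have := H2 hv0
            rw [← hbc] at this
            field_simp at this
            exact this
          · exact H1 hu0
        have hsq : z 1 ^ 2 = 1 := by rw [← ha]; exact h0
        have : (z 1 - 1) * (z 1 + 1) = 0 := by linear_combination hsq
        rcases mul_eq_zero.mp this with h | h
        · have h1 : z 1 = 1 := by linear_combination h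
          exact Or.inl (mk1 h0 h1 (hbc ▸ h1))
        · have h1 : z 1 = -1 := by linear_combination h
          exact Or.inr (Or.inl ⟨⟨hv1, hv2⟩, mk2 h0 h1 (hbc ▸ h1)⟩)
      · have h2 : z 2 = 1 := H6 hv2
        have h1 : z 1 = 1 := hbc.trans h2
        have h0 : z 0 = 1 := by
          rcases em (u 0 = 0) with hu0 | hu0
          · have hv0 : v 0 ≠ 0 := (hs 0).resolve_left (not_not_intro hu0)
            have := H2 hv0
            rw [h1, h2] at this
            field_simp at this
            exact this
          · exact H1 hu0
        exact Or.inl (mk1 h0 h1 h2)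
    · have hba : z 1 = z 0 := H4 hv1
      have hca : z 2 = z 0 := hbc.symm.trans hba
      have h2 : z 2 = 1 := by
        rcases em (v 2 = 0) with hv2 | hv2
        · have hu2 : u 2 ≠ 0 := (hs 2).resolve_right (not_not_intro hv2)
          have h5 := H5 hu2
          rw [hba, hca] at h5
          have h6 : z 0 * z 0 = z 0 * 1 := by rw [mul_one]; exact h5
          rw [hca, mul_left_cancel₀ hz0 h6]
        · exact H6 hv2
      have h1 : z 1 = 1 := hbc.trans h2
      exact Or.inl (mk1 (hba.symm.trans h1) h1 h2)

lemma one_fixes (u v : Fin 3 → ℂ) : FixesEx3 (fun _ => 1) u v := by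
  simp [FixesEx3]

lemma case1_fixes (u v : Fin 3 → ℂ) (hv1 : v 1 = 0) (hv2 : v 2 = 0) :
    FixesEx3 ![1, -1, -1] u v := by
  refine ⟨?_, ?_, ?_, ?_, ?_, ?_⟩ <;> simp [hv1, hv2]

lemma case2_fixes (u v : Fin 3 → ℂ) (hu0 : u 0 = 0) (hu1 : u 1 = 0) :
    FixesEx3 ![-1, -1, 1] u v := by
  refine ⟨?_, ?_, ?_, ?_, ?_, ?_⟩ <;> simp [hu0, hu1]

/-- Lemma 2: a point of `S³×S³×S³` has nontrivial stabilizer for the action above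
iff `v₂ = v₃ = 0` or `u₁ = u₂ = 0`; in the first case the stabilizer is
`{(1,1,1),(1,-1,-1)} ≅ ℤ₂`, in the second `{(1,1,1),(-1,-1,1)} ≅ ℤ₂`. -/
theorem stmt_1 (u v : Fin 3 → ℂ) (hsphere : ∀ i, ‖u i‖ ^ 2 + ‖v i‖ ^ 2 = 1) :
    ((∃ z : Fin 3 → ℂ, (∀ i, ‖z i‖ = 1) ∧ z ≠ (fun _ => 1) ∧ FixesEx3 z u v) ↔
      ((v 1 = 0 ∧ v 2 = 0) ∨ (u 0 = 0 ∧ u 1 = 0))) ∧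
    ((v 1 = 0 ∧ v 2 = 0) →
      {z : Fin 3 → ℂ | (∀ i, ‖z i‖ = 1) ∧ FixesEx3 z u v} =
        {fun _ => 1, ![1, -1, -1]}) ∧
    ((u 0 = 0 ∧ u 1 = 0) →
      {z : Fin 3 → ℂ | (∀ i, ‖z i‖ = 1) ∧ FixesEx3 z u v} =
        {fun _ => 1, ![-1, -1, 1]}) := by
  have hs : ∀ i, u i ≠ 0 ∨ v i ≠ 0 := by
    intro i
    by_contra h
    push_neg at h
    have := hsphere i
    rw [h.1, h.2] at this; simp at this
  refine ⟨⟨?_, ?_⟩, ?_, ?_⟩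
  · rintro ⟨z, hn, hne, hf⟩
    rcases main_lemma u v z hn hs hf with h | ⟨h, _⟩ | ⟨h, _⟩
    · exact absurd h hne
    · exact Or.inl h
    · exact Or.inr h
  · rintro (⟨hv1, hv2⟩ | ⟨hu0, hu1⟩)
    · refine ⟨![1, -1, -1], ?_, ?_, case1_fixes u v hv1 hv2⟩
      · intro i; fin_cases i <;> simp
      · intro h; have := congrFun h 1; simp at this; norm_num at this
    · refine ⟨![-1, -1, 1], ?_, ?_, case2_fixes u v hu0 hu1⟩
      · intro i; fin_cases i <;> simp
      · intro h; have := congrFun h 1; simp at this; norm_num at this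
  · rintro ⟨hv1, hv2⟩
    ext z
    simp only [Set.mem_setOf_eq, Set.mem_insert_iff, Set.mem_singleton_iff]
    constructor
    · rintro ⟨hn, hf⟩
      rcases main_lemma u v z hn hs hf with h | ⟨_, h⟩ | ⟨⟨hu0', hu1'⟩, h⟩
      · exact Or.inl h
      · exact Or.inr h
      · exact absurd (Or.elim (hs 1) (fun h => h hu1') (fun h => h hv1)) not_false
    · rintro (rfl | rfl)
      · exact ⟨fun i => by simp, one_fixes u v⟩
      · exact ⟨fun i => by fin_cases i <;> simp, case1_fixes u v hv1 hv2⟩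
  · rintro ⟨hu0, hu1⟩
    ext z
    simp only [Set.mem_setOf_eq, Set.mem_insert_iff, Set.mem_singleton_iff]
    constructor
    · rintro ⟨hn, hf⟩
      rcases main_lemma u v z hn hs hf with h | ⟨⟨hv1', hv2'⟩, h⟩ | ⟨_, h⟩
      · exact Or.inl h
      · exact absurd (Or.elim (hs 1) (fun h => h hu1) (fun h => h hv1')) not_false
      · exact Or.inr h
    · rintro (rfl | rfl)
      · exact ⟨fun i => by simp, one_fixes u v⟩
      · exact ⟨fun i => by fin_cases i <;> simp, case2_fixes u v hu0 hu1⟩
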